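/- Let ξ be standard exponential, S_t := 1_{ξ > t} e^t a P-martingale on [0,T], and Q the measure with dQ/dP := S_T = 1_{ξ > T} e^T. Then Q(ξ > T) = 1, and under Q the process S equals (e^t)_{t∈[0,T]} a.s.; in particular S is Q-a.s. strictly increasing, so S admits an increasing profit under Q (the buy-and-hold strategy H ≡ 1 yields a nondecreasing gains process (H·S)_t = S_t - S_0 with Q((H·S)_T > 0) = 1). -/

import Mathlib

open MeasureTheory ProbabilityTheory Filter Set Function ENNReal

noncomputable section

variable {Ω : Type*}

/-- The natural filtration of the single-jump indicator process `t ↦ 1_{ξ ≤ t}`. -/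
def natFilt [MeasurableSpace Ω] (ξ : Ω → ℝ) (t : ℝ) : MeasurableSpace Ω :=
  ⨆ s ∈ Set.Iic t, MeasurableSpace.comap
    (fun ω => if ξ ω ≤ s then (1:ℝ) else 0) (borel ℝ)

/-- The right-continuous filtration generated by the process `1_{ξ ≤ ·}`. -/
def natFiltPlus [MeasurableSpace Ω] (ξ : Ω → ℝ) (t : ℝ) : MeasurableSpace Ω :=
  ⨅ u ∈ Set.Ioi t, natFilt ξ u

/-- The single-jump process `S_t = 1_{ξ > t} e^t`. -/
def jumpProc (ξ : Ω → ℝ) (t : ℝ) (ω : Ω) : ℝ :=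
  if t < ξ ω then Real.exp t else 0


/-- Let `ξ` be standard exponential, `S_t = 1_{ξ > t} e^t` on `[0,T]`, and `Q` the
measure with `dQ/dP = S_T = 1_{ξ > T} e^T`. Then `Q(ξ > T) = 1` and under `Q` the
process `S` equals `(e^t)_{t ∈ [0,T]}` a.s.; in particular `S` is `Q`-a.s. strictly
increasing on `[0,T]`, so `S` admits an increasing profit under `Q`: the buy-and-hold
strategy `H ≡ 1` yields a nondecreasing gains process `(H·S)_t = S_t - S_0` with
`Q((H·S)_T > 0) = 1`. -/
theorem jump_process_increasing_profit {mΩ : MeasurableSpace Ω}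
    (P : Measure Ω) [IsProbabilityMeasure P] (ξ : Ω → ℝ) (hξ : Measurable ξ)
    (hexp : ∀ t : ℝ, 0 ≤ t → P {ω | t < ξ ω} = ENNReal.ofReal (Real.exp (-t)))
    (T : ℝ) (hT : 0 < T) :
    (P.withDensity (fun ω => ENNReal.ofReal (jumpProc ξ T ω)) {ω | T < ξ ω} = 1) ∧
    (∀ᵐ ω ∂(P.withDensity fun ω => ENNReal.ofReal (jumpProc ξ T ω)),
      ∀ t ∈ Set.Icc (0:ℝ) T, jumpProc ξ t ω = Real.exp t) ∧
    (∀ᵐ ω ∂(P.withDensity fun ω => ENNReal.ofReal (jumpProc ξ T ω)),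
      StrictMonoOn (fun t => jumpProc ξ t ω) (Set.Icc (0:ℝ) T)) ∧
    (∀ᵐ ω ∂(P.withDensity fun ω => ENNReal.ofReal (jumpProc ξ T ω)),
      MonotoneOn (fun t => jumpProc ξ t ω - jumpProc ξ 0 ω) (Set.Icc (0:ℝ) T)) ∧
    (P.withDensity (fun ω => ENNReal.ofReal (jumpProc ξ T ω))
      {ω | 0 < jumpProc ξ T ω - jumpProc ξ 0 ω} = 1) := by
  set Q := P.withDensity (fun ω => ENNReal.ofReal (jumpProc ξ T ω)) with hQdef
  have hA : MeasurableSet {ω | T < ξ ω} := measurableSet_lt measurable_const hξ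
  have hdens : (fun ω => ENNReal.ofReal (jumpProc ξ T ω))
      = {ω | T < ξ ω}.indicator (fun _ => ENNReal.ofReal (Real.exp T)) := by
    ext ω
    by_cases h : T < ξ ω <;> simp [jumpProc, h, Set.indicator, Set.mem_setOf_eq]
  have hQuniv : Q Set.univ = 1 := by
    rw [hQdef, withDensity_apply _ MeasurableSet.univ, Measure.restrict_univ]
    calc ∫⁻ ω, ENNReal.ofReal (jumpProc ξ T ω) ∂P
        = ∫⁻ ω, {ω | T < ξ ω}.indicator (fun _ => ENNReal.ofReal (Real.exp T)) ω ∂P :=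
          lintegral_congr fun ω => congrFun hdens ω
      _ = 1 := by
          rw [lintegral_indicator hA, setLIntegral_const, hexp T hT.le,
            ← ENNReal.ofReal_mul (Real.exp_nonneg T), ← Real.exp_add]
          simp
  have hQcompl : Q {ω | T < ξ ω}ᶜ = 0 := by
    rw [hQdef, withDensity_apply _ hA.compl]
    rw [setLIntegral_congr_fun hA.compl (fun ω hω => ?_), lintegral_zero]
    have : ¬ T < ξ ω := hω
    simp [jumpProc, this]
  have hQA : Q {ω | T < ξ ω} = 1 := by
    have h := measure_add_measure_compl (μ := Q) hA
    rw [hQcompl, add_zero, hQuniv] at h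
    exact h
  have hae : ∀ᵐ ω ∂Q, T < ξ ω := by
    rw [ae_iff]
    exact hQcompl
  have hae2 : ∀ᵐ ω ∂Q, ∀ t ∈ Set.Icc (0:ℝ) T, jumpProc ξ t ω = Real.exp t := by
    filter_upwards [hae] with ω hω t ht
    have : t < ξ ω := lt_of_le_of_lt ht.2 hω
    simp [jumpProc, this]
  refine ⟨hQA, hae2, ?_, ?_, ?_⟩
  · filter_upwards [hae2] with ω hω a ha b hb hab
    simp only [hω a ha, hω b hb]
    exact Real.exp_lt_exp.2 hab
  · filter_upwards [hae2] with ω hω a ha b hb hab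
    simp only [hω a ha, hω b hb]
    have := Real.exp_le_exp.2 hab
    linarith
  · refine le_antisymm ((measure_mono (Set.subset_univ _)).trans hQuniv.le) ?_
    rw [← hQA]
    refine measure_mono fun ω hω => ?_
    have hω : T < ξ ω := hω
    have h0 : (0:ℝ) < ξ ω := hT.trans hω
    have hTj : jumpProc ξ T ω = Real.exp T := by simp [jumpProc, hω]
    have h0j : jumpProc ξ 0 ω = 1 := by simp [jumpProc, h0]
    have : (1:ℝ) < Real.exp T := Real.one_lt_exp_iff.2 hT
    simp only [Set.mem_setOf_eq, hTj, h0j]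
    linarith
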